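/- arXiv:1912.04901 — 2 statements merged into one kernel-verified Lean document; each statement's English description precedes it below -/
import Mathlib

section
/- Let X be a barrelled topological vector space over ℝ, Y a locally convex topological vector space over ℝ, and Γ a linear subspace of X × Y with Dom Γ = X. Then for every neighbourhood B of 0 in Y, the closure of Γ B = {x : ∃ b ∈ B, (x, b) ∈ Γ} is a neighbourhood of 0 in X. -/
open Set Filter Pointwise

/-- A barrel (closed, balanced, convex, absorbent set) in a barrelled space is a
neighbourhood of zero. -/
theorem barrel_mem_nhds_aux {X : Type*} [AddCommGroup X] [Module ℝ X] [TopologicalSpace X]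
    [IsTopologicalAddGroup X] [ContinuousSMul ℝ X] [BarrelledSpace ℝ X]
    {C : Set X} (hcl : IsClosed C) (hbal : Balanced ℝ C) (hconv : Convex ℝ C)
    (habs : Absorbent ℝ C) : C ∈ nhds (0 : X) := by
  set p : Seminorm ℝ X := gaugeSeminorm hbal hconv habs with hp
  have hgauge : ∀ x, p x = gauge C x := fun x => rfl
  have hlsc : LowerSemicontinuous (p : X → ℝ) := by
    rw [lowerSemicontinuous_iff_isClosed_preimage]
    intro c
    rcases lt_or_ge c 0 with h | h
    · have : (p : X → ℝ) ⁻¹' Iic c = ∅ := by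
        ext x
        simp only [mem_preimage, mem_Iic, mem_empty_iff_false, iff_false, not_le]
        exact lt_of_lt_of_le h (apply_nonneg p x)
      rw [this]; exact isClosed_empty
    · have key : (p : X → ℝ) ⁻¹' Iic c = ⋂ t ∈ Ioi c, t • C := by
        ext x
        simp only [mem_preimage, mem_Iic, mem_iInter, mem_Ioi]
        constructor
        · intro hx t ht
          have hne : {r : ℝ | 0 < r ∧ x ∈ r • C}.Nonempty := by
            obtain ⟨r, hr⟩ := absorbs_iff_norm.mp (habs x)
            refine ⟨max r 1, lt_of_lt_of_le one_pos (le_max_right r 1), ?_⟩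
            have := hr (max r 1) (by rw [Real.norm_eq_abs,
              abs_of_pos (lt_of_lt_of_le one_pos (le_max_right r 1))]; exact le_max_left r 1)
            exact this rfl
          have hlt : gauge C x < t := lt_of_le_of_lt ((hgauge x) ▸ hx) ht
          obtain ⟨r, ⟨hr0, hrC⟩, hrt⟩ := exists_lt_of_csInf_lt hne hlt
          exact hbal.smul_mono (by
            rw [Real.norm_eq_abs, Real.norm_eq_abs, abs_of_pos hr0,
              abs_of_pos (h.trans_lt ht)]; exact hrt.le) hrC
        · intro hx
          rw [hgauge]
          refine le_of_forall_gt_imp_ge_of_dense fun t ht => ?_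
          exact gauge_le_of_mem (h.trans ht.le) (hx t ht)
      rw [key]
      refine isClosed_biInter fun t ht => ?_
      exact hcl.smul_of_ne_zero (ne_of_gt (h.trans_lt ht))
  have hcont : Continuous (p : X → ℝ) := Seminorm.continuous_of_lowerSemicontinuous p hlsc
  have h0 : (p : X → ℝ) 0 = 0 := map_zero p
  have hopen : (p : X → ℝ) ⁻¹' Iio 1 ∈ nhds (0 : X) :=
    hcont.continuousAt.preimage_mem_nhds (by rw [h0]; exact Iio_mem_nhds one_pos)
  refine Filter.mem_of_superset hopen ?_
  intro x hx
  exact gauge_lt_one_subset_self hconv habs.zero_mem habs hx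

theorem stmt_6 {X Y : Type*}
    [AddCommGroup X] [Module ℝ X] [TopologicalSpace X] [IsTopologicalAddGroup X]
    [ContinuousSMul ℝ X] [LocallyConvexSpace ℝ X] [BarrelledSpace ℝ X]
    [AddCommGroup Y] [Module ℝ Y] [TopologicalSpace Y] [IsTopologicalAddGroup Y]
    [ContinuousSMul ℝ Y] [LocallyConvexSpace ℝ Y]
    (Γ : Submodule ℝ (X × Y)) (hdom : ∀ x : X, ∃ y : Y, (x, y) ∈ Γ)
    (B : Set Y) (hB : B ∈ nhds (0 : Y)) :
    closure {x : X | ∃ b ∈ B, (x, b) ∈ Γ} ∈ nhds (0 : X) := by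
  obtain ⟨B₀, ⟨hB₀n, hB₀bal, hB₀conv⟩, hB₀B⟩ := (nhds_hasBasis_absConvex ℝ Y).mem_iff.mp hB
  set S : Set X := {x : X | ∃ b ∈ B₀, (x, b) ∈ Γ} with hS
  have hSbal : Balanced ℝ S := by
    intro a ha x hx
    obtain ⟨x', ⟨b, hb, hΓ⟩, rfl⟩ := hx
    exact ⟨a • b, hB₀bal a ha (smul_mem_smul_set hb), Γ.smul_mem a hΓ⟩
  have hSconv : Convex ℝ S := by
    rintro x₁ ⟨b₁, hb₁, h₁⟩ x₂ ⟨b₂, hb₂, h₂⟩ s t hs ht hst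
    exact ⟨s • b₁ + t • b₂, hB₀conv hb₁ hb₂ hs ht hst,
      Γ.add_mem (Γ.smul_mem s h₁) (Γ.smul_mem t h₂)⟩
  have hSabs : Absorbent ℝ S := by
    intro x
    obtain ⟨y, hy⟩ := hdom x
    obtain ⟨r, hr⟩ := absorbs_iff_norm.mp (absorbent_nhds_zero (𝕜 := ℝ) hB₀n y)
    refine absorbs_iff_norm.mpr ⟨max r 1, fun c hc z hz => ?_⟩
    rcases hz with rfl
    have hc1 : (1 : ℝ) ≤ ‖c‖ := le_trans (le_max_right r 1) hc
    have hc0 : c ≠ 0 := by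
      intro h; rw [h, norm_zero] at hc1; linarith
    obtain ⟨b, hb, hbc⟩ := hr c (le_trans (le_max_left r 1) hc) rfl
    refine ⟨c⁻¹ • z, ⟨b, hb, ?_⟩, by simp [smul_smul, mul_inv_cancel₀ hc0]⟩
    have : c⁻¹ • ((z, y) : X × Y) ∈ Γ := Γ.smul_mem _ hy
    have heq : c⁻¹ • ((z, y) : X × Y) = (c⁻¹ • z, b) := by
      rw [Prod.smul_mk]
      congr 1
      rw [← hbc, smul_smul, inv_mul_cancel₀ hc0, one_smul]
    rwa [heq] at this
  have hC : closure S ∈ nhds (0 : X) :=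
    barrel_mem_nhds_aux isClosed_closure (hSbal.closure) (hSconv.closure)
      (hSabs.mono subset_closure)
  refine Filter.mem_of_superset hC (closure_mono ?_)
  rintro x ⟨b, hb, hΓ⟩
  exact ⟨b, hB₀B hb, hΓ⟩
end

section
/- Let X be a Hausdorff barrelled locally convex space over ℝ and Y a Banach space. If Γ ⊆ X × Y is a closed linear subspace with Dom Γ = X, then for every open set B ⊆ Y, the set Γ B = {x ∈ X : ∃ b ∈ B, (x, b) ∈ Γ} is open in X. -/
open Filter Topology Set Metric
open scoped Pointwise

theorem my_cgt {X Z : Type*}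
    [AddCommGroup X] [Module ℝ X] [TopologicalSpace X] [IsTopologicalAddGroup X]
    [ContinuousSMul ℝ X] [BarrelledSpace ℝ X]
    [NormedAddCommGroup Z] [NormedSpace ℝ Z] [CompleteSpace Z]
    (T : X →ₗ[ℝ] Z) (hT : IsClosed {p : X × Z | T p.1 = p.2}) :
    Continuous T := by
  set S : Set X := T ⁻¹' Metric.ball (0 : Z) 1 with hS
  set D : Set X := closure S with hDdef
  have hSconv : Convex ℝ S := (convex_ball (0 : Z) 1).linear_preimage T
  have hSbal : Balanced ℝ S := by
    rw [balanced_iff_smul_mem]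
    intro a ha x hx
    simp only [hS, mem_preimage, map_smul]
    exact (balanced_ball_zero (r := (1:ℝ))).smul_mem ha hx
  have hSabs : Absorbent ℝ S := by
    intro x
    have h := (absorbent_ball_zero (𝕜 := ℝ) (E := Z) one_pos) (T x)
    refine (h.eventually.and (Bornology.eventually_ne_cobounded 0)).mono ?_
    rintro a ⟨ha, ha0⟩
    rw [singleton_subset_iff] at ha ⊢
    rw [mem_smul_set_iff_inv_smul_mem₀ ha0] at ha ⊢
    simpa only [hS, mem_preimage, map_smul] using ha
  have hDconv : Convex ℝ D := hSconv.closure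
  have hDbal : Balanced ℝ D := hSbal.closure
  have hDabs : Absorbent ℝ D := fun x => (hSabs x).mono_left subset_closure
  have hD0 : (0 : X) ∈ D := hDabs.zero_mem
  have hDclosed : IsClosed D := isClosed_closure
  have hmem : ∀ x : X, x ∈ D ↔ gauge D x ≤ 1 := fun x =>
    ⟨gauge_le_one_of_mem, fun h =>
      hDclosed.closure_eq ▸ mem_closure_of_gauge_le_one hDconv hD0 hDabs h⟩
  have hsub : ∀ c : ℝ, 0 < c → {x : X | gauge D x ≤ c} = c • D := by
    intro c hc
    ext x
    rw [mem_smul_set_iff_inv_smul_mem₀ hc.ne', hmem,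
      gauge_smul_of_nonneg (inv_nonneg.2 hc.le), smul_eq_mul, inv_mul_le_iff₀ hc, mul_one,
      mem_setOf_eq]
  have hlsc : LowerSemicontinuous (gauge D) := by
    rw [lowerSemicontinuous_iff_isClosed_preimage]
    intro y
    rcases lt_or_ge y 0 with hy | hy
    · convert isClosed_empty
      ext x
      simp only [mem_preimage, mem_Iic, mem_empty_iff_false, iff_false, not_le]
      exact lt_of_lt_of_le hy (gauge_nonneg x)
    · have : gauge D ⁻¹' Iic y = ⋂ n : ℕ, (y + ((n : ℝ) + 1)⁻¹) • D := by
        ext x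
        simp only [mem_preimage, mem_Iic, mem_iInter]
        constructor
        · intro h n
          rw [← hsub _ (by positivity)]
          exact le_trans h (le_add_of_nonneg_right (by positivity))
        · intro h
          refine le_of_forall_pos_le_add fun ε hε => ?_
          obtain ⟨n, hn⟩ := exists_nat_one_div_lt hε
          have := h n
          rw [← hsub _ (by positivity)] at this
          refine le_trans this (by rw [one_div] at hn; linarith)
      rw [this]
      exact isClosed_iInter fun n => hDclosed.smul_of_ne_zero (by positivity)
  have hpcont : Continuous (gaugeSeminorm hDbal hDconv hDabs) :=
    Seminorm.continuous_of_lowerSemicontinuous _ hlsc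
  have hDnhds : D ∈ 𝓝 (0 : X) := by
    refine mem_of_superset
      (Seminorm.ball_mem_nhds hpcont one_pos) ?_
    intro x hx
    rw [Seminorm.mem_ball_zero] at hx
    exact gauge_lt_one_subset_self hDconv hD0 hDabs hx
  have hDr : ∀ r : ℝ, 0 < r → closure (T ⁻¹' Metric.ball (0:Z) r) ∈ 𝓝 (0 : X) := by
    intro r hr
    refine mem_of_superset ((set_smul_mem_nhds_zero_iff hr.ne').2 hDnhds) ?_
    refine Subset.trans (smul_closure_subset r S) (closure_mono ?_)
    rintro _ ⟨s, hs, rfl⟩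
    simp only [hS, mem_preimage, map_smul, mem_ball_zero_iff] at hs ⊢
    rw [norm_smul, Real.norm_of_nonneg hr.le]
    calc r * ‖T s‖ < r * 1 := by exact (mul_lt_mul_iff_right₀ hr).2 hs
    _ = r := mul_one r
  have key : ∀ r : ℝ, 0 < r → ∀ x ∈ closure (T ⁻¹' Metric.ball (0:Z) r),
      ∃ u, ‖T u‖ < r ∧ x - u ∈ closure (T ⁻¹' Metric.ball (0:Z) (r/2)) := by
    intro r hr x hx
    have h1 : (fun u : X => x - u) ⁻¹' closure (T ⁻¹' Metric.ball (0:Z) (r/2)) ∈ 𝓝 x := by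
      refine ContinuousAt.preimage_mem_nhds (by fun_prop) ?_
      simpa using hDr (r/2) (by positivity)
    obtain ⟨u, hu⟩ := mem_closure_iff_nhds.mp hx _ h1
    refine ⟨u, ?_, hu.1⟩
    simpa only [mem_preimage, mem_ball_zero_iff] using hu.2
  have main : ∀ x ∈ D, ‖T x‖ ≤ 2 := by
    intro x hx
    set Dn : ℕ → Set X := fun n => closure (T ⁻¹' Metric.ball (0:Z) ((2:ℝ)⁻¹ ^ n)) with hDn
    have hx0 : x ∈ Dn 0 := by simpa [hDn] using hx
    have step : ∀ n : ℕ, ∀ y ∈ Dn n, ∃ u, ‖T u‖ < (2:ℝ)⁻¹ ^ n ∧ y - u ∈ Dn (n+1) := by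
      intro n y hy
      obtain ⟨u, h1, h2⟩ := key _ (by positivity) y hy
      refine ⟨u, h1, ?_⟩
      have he : (2:ℝ)⁻¹ ^ n / 2 = (2:ℝ)⁻¹ ^ (n+1) := by ring
      rwa [he] at h2
    choose u hu1 hu2 using step
    set f : ∀ n : ℕ, {y : X // y ∈ Dn n} := fun n =>
      Nat.rec ⟨x, hx0⟩ (fun k p => ⟨p.1 - u k p.1 p.2, hu2 k p.1 p.2⟩) n with hf
    set r : ℕ → X := fun n => (f n).1 with hr
    set v : ℕ → X := fun n => u n (r n) (f n).2 with hv
    have hrv : ∀ n, r (n+1) = r n - v n := fun n => rfl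
    have hvn : ∀ n, ‖T (v n)‖ < (2:ℝ)⁻¹ ^ n := fun n => hu1 n (r n) (f n).2
    have hgeom : Summable fun n : ℕ => (2:ℝ)⁻¹ ^ n :=
      summable_geometric_of_lt_one (by norm_num) (by norm_num)
    have hnorm : Summable fun n => ‖T (v n)‖ :=
      Summable.of_nonneg_of_le (fun n => norm_nonneg _) (fun n => (hvn n).le) hgeom
    have hsum : Summable fun n => T (v n) := hnorm.of_norm
    set z := ∑' n, T (v n) with hz
    have hz2 : ‖z‖ ≤ 2 := by
      calc ‖z‖ ≤ ∑' n, ‖T (v n)‖ := norm_tsum_le_tsum_norm hnorm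
      _ ≤ ∑' n : ℕ, (2:ℝ)⁻¹ ^ n := Summable.tsum_le_tsum (fun n => (hvn n).le) hnorm hgeom
      _ = 2 := by
        rw [tsum_geometric_of_lt_one (by norm_num) (by norm_num)]; norm_num
    have htel : ∀ n, ∑ k ∈ Finset.range n, v k = x - r n := by
      intro n
      induction n with
      | zero => simp [hr, hf]
      | succ n ih => rw [Finset.sum_range_succ, ih, hrv]; abel
    have hts : Tendsto (fun n => ∑ k ∈ Finset.range n, T (v k)) atTop (𝓝 z) :=
      hsum.hasSum.tendsto_sum_nat
    have hgr : T x = z := by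
      have hmem2 : (x, z) ∈ {p : X × Z | T p.1 = p.2} := by
        rw [← hT.closure_eq, mem_closure_iff_nhds]
        intro t ht
        rw [mem_nhds_prod_iff] at ht
        obtain ⟨U, hU, W, hW, hUW⟩ := ht
        obtain ⟨ε, hε, hball⟩ := Metric.mem_nhds_iff.mp hW
        obtain ⟨N1, hN1⟩ := Metric.tendsto_atTop.mp hts (ε/2) (half_pos hε)
        have h2 : Tendsto (fun n : ℕ => (2:ℝ)⁻¹ ^ n) atTop (𝓝 0) :=
          tendsto_pow_atTop_nhds_zero_of_lt_one (by norm_num) (by norm_num)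
        obtain ⟨N2, hN2⟩ := Metric.tendsto_atTop.mp h2 (ε/2) (half_pos hε)
        set N := max N1 N2 with hN
        have hA : ‖(∑ k ∈ Finset.range N, T (v k)) - z‖ < ε/2 := by
          have := hN1 N (le_max_left _ _); rwa [dist_eq_norm] at this
        have hB : (2:ℝ)⁻¹ ^ N < ε/2 := by
          have := hN2 N (le_max_right _ _)
          rwa [Real.dist_eq, sub_zero, abs_of_nonneg (by positivity)] at this
        have hnbU : (fun w : X => (x - r N) + w) ⁻¹' U ∈ 𝓝 (r N) := by
          refine ContinuousAt.preimage_mem_nhds (by fun_prop) ?_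
          simpa using hU
        obtain ⟨u', hu'⟩ := mem_closure_iff_nhds.mp (f N).2 _ hnbU
        set a := (x - r N) + u' with ha
        have haU : a ∈ U := hu'.1
        have hu'ball : ‖T u'‖ < (2:ℝ)⁻¹ ^ N := by
          simpa only [mem_preimage, mem_ball_zero_iff] using hu'.2
        have haW : T a ∈ W := by
          apply hball
          rw [mem_ball, dist_eq_norm]
          have : T a - z = ((∑ k ∈ Finset.range N, T (v k)) - z) + T u' := by
            rw [ha, map_add, map_sub]
            have : T x - T (r N) = ∑ k ∈ Finset.range N, T (v k) := by
              rw [← map_sub, ← htel N, map_sum]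
            rw [this]; abel
          rw [this]
          calc ‖((∑ k ∈ Finset.range N, T (v k)) - z) + T u'‖
              ≤ ‖(∑ k ∈ Finset.range N, T (v k)) - z‖ + ‖T u'‖ := norm_add_le _ _
          _ < ε/2 + ε/2 := add_lt_add hA (lt_trans hu'ball hB)
          _ = ε := add_halves ε
        exact ⟨(a, T a), hUW (Set.mk_mem_prod haU haW), rfl⟩
      exact hmem2
    rw [hgr]
    exact hz2
  have hcont0 : ContinuousAt T 0 := by
    rw [ContinuousAt, map_zero]
    rw [Metric.nhds_basis_closedBall.tendsto_right_iff]
    intro ε hε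
    have hsm : (ε/3) • D ∈ 𝓝 (0 : X) :=
      (set_smul_mem_nhds_zero_iff (by positivity : (ε/3 : ℝ) ≠ 0)).2 hDnhds
    filter_upwards [hsm] with w hw
    obtain ⟨d, hd, rfl⟩ := hw
    rw [mem_closedBall_zero_iff, map_smul, norm_smul, Real.norm_of_nonneg (by positivity)]
    calc ε/3 * ‖T d‖ ≤ ε/3 * 2 := by
          exact mul_le_mul_of_nonneg_left (main d hd) (by positivity)
    _ ≤ ε := by linarith
  exact continuous_of_continuousAt_zero T hcont0

theorem stmt_18 {X Y : Type*}
    [AddCommGroup X] [Module ℝ X] [TopologicalSpace X] [IsTopologicalAddGroup X]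
    [ContinuousSMul ℝ X] [LocallyConvexSpace ℝ X] [T2Space X] [BarrelledSpace ℝ X]
    [NormedAddCommGroup Y] [NormedSpace ℝ Y] [CompleteSpace Y]
    (Γ : Submodule ℝ (X × Y)) (hclosed : IsClosed (Γ : Set (X × Y)))
    (hdom : ∀ x : X, ∃ y : Y, (x, y) ∈ Γ)
    (B : Set Y) (hB : IsOpen B) :
    IsOpen {x : X | ∃ b ∈ B, (x, b) ∈ Γ} := by
  classical
  set N : Submodule ℝ Y := Γ.comap (LinearMap.inr ℝ X Y) with hN
  haveI hNclosed : IsClosed (N : Set Y) := by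
    have : (N : Set Y) = (fun y : Y => ((0 : X), y)) ⁻¹' (Γ : Set (X × Y)) := rfl
    rw [this]
    exact hclosed.preimage (by fun_prop)
  set c : X → Y := fun x => Classical.choose (hdom x) with hc
  have hcΓ : ∀ x, (x, c x) ∈ Γ := fun x => Classical.choose_spec (hdom x)
  have hwd : ∀ (x : X) (y : Y), (x, y) ∈ Γ → N.mkQ (c x) = N.mkQ y := by
    intro x y hy
    rw [Submodule.mkQ_apply, Submodule.mkQ_apply, Submodule.Quotient.eq]
    have : ((0 : X), c x - y) ∈ Γ := by
      have := Γ.sub_mem (hcΓ x) hy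
      simpa using this
    exact this
  set T : X →ₗ[ℝ] Y ⧸ N :=
    { toFun := fun x => N.mkQ (c x)
      map_add' := by
        intro a b
        show N.mkQ (c (a + b)) = N.mkQ (c a) + N.mkQ (c b)
        rw [hwd (a + b) (c a + c b) (by simpa using Γ.add_mem (hcΓ a) (hcΓ b)), map_add]
      map_smul' := by
        intro m a
        show N.mkQ (c (m • a)) = m • N.mkQ (c a)
        rw [hwd (m • a) (m • c a) (by simpa using Γ.smul_mem m (hcΓ a)), map_smul] } with hT
  have hTiff : ∀ (x : X) (y : Y), T x = N.mkQ y ↔ (x, y) ∈ Γ := by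
    intro x y
    constructor
    · intro h
      have h1 : c x - y ∈ N := by
        rwa [hT, LinearMap.coe_mk, AddHom.coe_mk, Submodule.mkQ_apply, Submodule.mkQ_apply,
          Submodule.Quotient.eq] at h
      have h2 : ((0 : X), c x - y) ∈ Γ := h1
      have := Γ.sub_mem (hcΓ x) h2
      simpa using this
    · intro h
      exact hwd x y h
  have hTgraph : IsClosed {p : X × (Y ⧸ N) | T p.1 = p.2} := by
    have hq : Topology.IsQuotientMap (Prod.map (id : X → X) N.mkQ) :=
      (IsOpenQuotientMap.id.prodMap N.isOpenQuotientMap_mkQ).isQuotientMap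
    rw [← hq.isClosed_preimage]
    have : Prod.map (id : X → X) N.mkQ ⁻¹' {p : X × (Y ⧸ N) | T p.1 = p.2}
        = (Γ : Set (X × Y)) := by
      ext ⟨x, y⟩
      simp only [mem_preimage, Prod.map_apply, id_eq, mem_setOf_eq, SetLike.mem_coe]
      exact hTiff x y
    rw [this]
    exact hclosed
  have hTcont : Continuous T := my_cgt T hTgraph
  have himg : {x : X | ∃ b ∈ B, (x, b) ∈ Γ} = T ⁻¹' (N.mkQ '' B) := by
    ext x
    simp only [mem_setOf_eq, mem_preimage, mem_image]
    constructor
    · rintro ⟨b, hb, hbΓ⟩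
      exact ⟨b, hb, ((hTiff x b).2 hbΓ).symm⟩
    · rintro ⟨b, hb, hbeq⟩
      exact ⟨b, hb, (hTiff x b).1 hbeq.symm⟩
  rw [himg]
  exact hTcont.isOpen_preimage _ (N.isOpenMap_mkQ B hB)
end
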